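/- arXiv:1112.0256 — 4 statements merged into one kernel-verified Lean document; each statement's English description precedes it below -/
import Mathlib

section
/- Let m ≥ 3 be an integer and let χ(λ) = ∏_{k=1}^{m−1} (λ + k) − m! be a polynomial in the complex variable λ. Then: (a) χ(1) = 0; (b) every complex root of χ is a simple root; and (c) every complex root λ of χ with λ ≠ 1 satisfies Re(λ) < 1. -/
open Polynomial

/-- The characteristic polynomial `χ(λ) = ∏_{k=1}^{m-1} (λ + k) − m!` of the
`m`-ary search tree. -/
noncomputable def chiPoly (m : ℕ) : Polynomial ℂ :=
  (∏ k ∈ Finset.Icc 1 (m - 1), (X + C (k : ℂ))) - C (m.factorial : ℂ)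

lemma prod_Icc_add_one (n : ℕ) : ∏ k ∈ Finset.Icc 1 n, (k + 1) = (n + 1).factorial := by
  induction n with
  | zero => simp
  | succ n ih =>
    rw [Finset.prod_Icc_succ_top (by omega), ih, Nat.factorial_succ (n+1)]
    ring

lemma prod_Ioc_sub (j n : ℕ) :
    ∏ k ∈ Finset.Ioc j (j + n), ((k : ℝ) - j) = n.factorial := by
  induction n with
  | zero => simp
  | succ n ih =>
    have h : j + (n + 1) = (j + n) + 1 := by ring
    rw [h, Finset.prod_Ioc_succ_top (by omega), ih, Nat.factorial_succ]
    push_cast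
    ring

lemma prod_Ioc_reflect (j : ℕ) :
    ∏ k ∈ Finset.Ioc 0 j, ((j : ℝ) + 1 - k) = j.factorial := by
  have h : ∏ k ∈ Finset.Ioc 0 j, ((j : ℝ) + 1 - k) = ∏ k ∈ Finset.Ioc 0 j, ((k : ℝ) - 0) := by
    refine Finset.prod_nbij' (fun k => j + 1 - k) (fun k => j + 1 - k) ?_ ?_ ?_ ?_ ?_
    · intro a ha; simp only [Finset.mem_Ioc] at *; omega
    · intro a ha; simp only [Finset.mem_Ioc] at *; omega
    · intro a ha; simp only [Finset.mem_Ioc] at ha; show j + 1 - (j + 1 - a) = a; omega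
    · intro a ha; simp only [Finset.mem_Ioc] at ha; show j + 1 - (j + 1 - a) = a; omega
    · intro a ha
      simp only [Finset.mem_Ioc] at ha
      have : ((j + 1 - a : ℕ) : ℝ) = (j : ℝ) + 1 - a := by
        have : a ≤ j + 1 := by omega
        push_cast [Nat.cast_sub this]
        ring
      rw [this]
      ring
  rw [h]
  have := prod_Ioc_sub 0 j
  simpa using this

lemma deriv_linear_prod (s : Finset ℕ) (c : ℕ → ℂ) :
    derivative (∏ k ∈ s, (X + C (c k))) = ∑ k ∈ s, ∏ j ∈ s.erase k, (X + C (c j)) := by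
  classical
  induction s using Finset.induction_on with
  | empty => simp
  | @insert a s ha ih =>
    rw [Finset.prod_insert ha, derivative_mul, ih, Finset.sum_insert ha,
      Finset.erase_insert ha]
    simp only [derivative_add, derivative_X, derivative_C, add_zero, one_mul]
    rw [Finset.mul_sum]
    congr 1
    refine Finset.sum_congr rfl fun k hk => ?_
    rw [Finset.erase_insert_of_ne (by rintro rfl; exact ha hk : a ≠ k),
      Finset.prod_insert (fun h => ha (Finset.mem_of_mem_erase h))]

/-- For `m ≥ 3`: (a) `1` is a root of `χ`; (b) every complex root of `χ` is simple;
(c) every root `λ ≠ 1` satisfies `Re λ < 1`. -/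
theorem stmt2 (m : ℕ) (hm : 3 ≤ m) :
    (chiPoly m).IsRoot 1 ∧
    (∀ z : ℂ, (chiPoly m).IsRoot z → (chiPoly m).rootMultiplicity z = 1) ∧
    (∀ z : ℂ, (chiPoly m).IsRoot z → z ≠ 1 → z.re < 1) := by
  have hm1 : 1 ≤ m - 1 := by omega
  have hmm : m - 1 + 1 = m := by omega
  have heval : ∀ z : ℂ, (chiPoly m).eval z
      = (∏ k ∈ Finset.Icc 1 (m - 1), (z + (k : ℂ))) - (m.factorial : ℂ) := by
    intro z
    simp [chiPoly, eval_prod]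
  -- the core product value at 1
  have hprod1 : ∏ k ∈ Finset.Icc 1 (m - 1), ((1 : ℂ) + (k : ℂ)) = (m.factorial : ℂ) := by
    have h := prod_Icc_add_one (m - 1)
    rw [hmm] at h
    calc ∏ k ∈ Finset.Icc 1 (m - 1), ((1 : ℂ) + (k : ℂ))
        = ∏ k ∈ Finset.Icc 1 (m - 1), (((k + 1 : ℕ) : ℂ)) := by
          refine Finset.prod_congr rfl fun k _ => ?_; push_cast; ring
      _ = ((∏ k ∈ Finset.Icc 1 (m - 1), (k + 1) : ℕ) : ℂ) := by rw [Nat.cast_prod]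
      _ = (m.factorial : ℂ) := by rw [h]
  have hroot1 : (chiPoly m).IsRoot 1 := by
    simp [IsRoot, heval 1, hprod1]
  -- real product value: ∏ (k+1) = m!
  have hprodR : ∏ k ∈ Finset.Icc 1 (m - 1), ((k : ℝ) + 1) = (m.factorial : ℝ) := by
    have h := prod_Icc_add_one (m - 1)
    rw [hmm] at h
    calc ∏ k ∈ Finset.Icc 1 (m - 1), ((k : ℝ) + 1)
        = ((∏ k ∈ Finset.Icc 1 (m - 1), (k + 1) : ℕ) : ℝ) := by push_cast; rfl
      _ = (m.factorial : ℝ) := by rw [h]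
  -- chiPoly ≠ 0
  have hne : chiPoly m ≠ 0 := by
    intro h
    have h1 : (chiPoly m).eval (-1) = 0 := by rw [h]; simp
    rw [heval (-1)] at h1
    have hz : ∏ k ∈ Finset.Icc 1 (m - 1), ((-1 : ℂ) + (k : ℂ)) = 0 := by
      refine Finset.prod_eq_zero (Finset.mem_Icc.mpr ⟨le_refl 1, hm1⟩) ?_
      norm_num
    rw [hz] at h1
    have : (m.factorial : ℂ) ≠ 0 := Nat.cast_ne_zero.mpr m.factorial_pos.ne'
    simp only [zero_sub, neg_eq_zero] at h1
    exact this h1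
  -- part (c)
  have partc : ∀ z : ℂ, (chiPoly m).IsRoot z → z ≠ 1 → z.re < 1 := by
    intro z hz hz1
    by_contra hre
    push_neg at hre
    have hzp : ∏ k ∈ Finset.Icc 1 (m - 1), (z + (k : ℂ)) = (m.factorial : ℂ) := by
      have := hz
      rw [IsRoot, heval z, sub_eq_zero] at this
      exact this
    have habs : ∏ k ∈ Finset.Icc 1 (m - 1), ‖z + (k : ℂ)‖ = (m.factorial : ℝ) := by
      rw [← norm_prod, hzp, Complex.norm_natCast]
    have hlt : ∏ k ∈ Finset.Icc 1 (m - 1), ((k : ℝ) + 1)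
        < ∏ k ∈ Finset.Icc 1 (m - 1), ‖z + (k : ℂ)‖ := by
      refine Finset.prod_lt_prod (fun k hk => by positivity) (fun k hk => ?_) ?_
      · calc (k : ℝ) + 1 ≤ (k : ℝ) + z.re := by linarith
          _ = (z + (k : ℂ)).re := by simp; ring
          _ ≤ ‖z + (k : ℂ)‖ := Complex.re_le_norm _
      · refine ⟨1, Finset.mem_Icc.mpr ⟨le_refl 1, hm1⟩, ?_⟩
        have h4 : (4 : ℝ) < (z.re + 1) ^ 2 + z.im ^ 2 := by
          by_cases him : z.im = 0
          · have : z.re ≠ 1 := by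
              intro h; exact hz1 (Complex.ext h (by simp [him]))
            have : 1 < z.re := lt_of_le_of_ne hre (Ne.symm this)
            nlinarith
          · have : 0 < z.im ^ 2 := by positivity
            nlinarith
        have habs2 : ‖z + 1‖ ^ 2 = (z.re + 1) ^ 2 + z.im ^ 2 := by
          rw [Complex.sq_norm, Complex.normSq_apply]
          simp
          ring
        have : (2 : ℝ) ^ 2 < ‖z + 1‖ ^ 2 := by
          rw [habs2]; norm_num [h4]
        have h2 : (2 : ℝ) < ‖z + 1‖ :=
          lt_of_pow_lt_pow_left₀ 2 (norm_nonneg _) this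
        simp only [Nat.cast_one]
        linarith
    rw [hprodR, habs] at hlt
    exact lt_irrefl _ hlt
  -- part (b)
  have partb : ∀ z : ℂ, (chiPoly m).IsRoot z → (chiPoly m).rootMultiplicity z = 1 := by
    intro z hz
    have hpos : 0 < (chiPoly m).rootMultiplicity z :=
      (rootMultiplicity_pos hne).mpr hz
    have hzp : ∏ k ∈ Finset.Icc 1 (m - 1), (z + (k : ℂ)) = (m.factorial : ℂ) := by
      have := hz; rw [IsRoot, heval z, sub_eq_zero] at this; exact this
    have hfac_ne : (m.factorial : ℂ) ≠ 0 := Nat.cast_ne_zero.mpr m.factorial_pos.ne'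
    have hnz : ∀ k ∈ Finset.Icc 1 (m - 1), z + (k : ℂ) ≠ 0 := by
      intro k hk
      intro h0
      apply hfac_ne
      rw [← hzp]
      exact Finset.prod_eq_zero hk h0
    -- derivative is not a root
    have hder : ¬ (derivative (chiPoly m)).IsRoot z := by
      intro hd
      have hderiv : derivative (chiPoly m)
          = ∑ k ∈ Finset.Icc 1 (m - 1),
              ∏ j ∈ (Finset.Icc 1 (m - 1)).erase k, (X + C (j : ℂ)) := by
        rw [chiPoly, derivative_sub, derivative_C, sub_zero, deriv_linear_prod]
      have hdz : ∑ k ∈ Finset.Icc 1 (m - 1),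
          ∏ j ∈ (Finset.Icc 1 (m - 1)).erase k, (z + (j : ℂ)) = 0 := by
        have := hd
        rw [IsRoot, hderiv] at this
        simpa [eval_finset_sum, eval_prod] using this
      have herase : ∀ k ∈ Finset.Icc 1 (m - 1),
          ∏ j ∈ (Finset.Icc 1 (m - 1)).erase k, (z + (j : ℂ))
            = (m.factorial : ℂ) * (z + (k : ℂ))⁻¹ := by
        intro k hk
        have := Finset.mul_prod_erase (Finset.Icc 1 (m - 1)) (fun j : ℕ => z + (j : ℂ)) hk
        rw [hzp] at this
        field_simp [hnz k hk]
        linear_combination this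
      rw [Finset.sum_congr rfl herase, ← Finset.mul_sum] at hdz
      have hsum : ∑ k ∈ Finset.Icc 1 (m - 1), (z + (k : ℂ))⁻¹ = 0 := by
        rcases mul_eq_zero.mp hdz with h | h
        · exact absurd h hfac_ne
        · exact h
      -- imaginary part forces z real
      have him : z.im = 0 := by
        by_contra him
        have himsum : (∑ k ∈ Finset.Icc 1 (m - 1), (z + (k : ℂ))⁻¹).im
            = ∑ k ∈ Finset.Icc 1 (m - 1), (-z.im / Complex.normSq (z + (k : ℂ))) := by
          rw [Complex.im_sum]
          refine Finset.sum_congr rfl fun k hk => ?_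
          rw [Complex.inv_im]
          congr 1
          simp
        have h0 : ∑ k ∈ Finset.Icc 1 (m - 1), (-z.im / Complex.normSq (z + (k : ℂ))) = 0 := by
          rw [← himsum, hsum]
          simp
        have hpos' : ∀ k ∈ Finset.Icc 1 (m - 1),
            0 < (Complex.normSq (z + (k : ℂ)))⁻¹ := by
          intro k hk
          have h1 : 0 < Complex.normSq (z + (k : ℂ)) := Complex.normSq_pos.mpr (hnz k hk)
          positivity
        have hne' : Finset.Nonempty (Finset.Icc 1 (m - 1)) :=
          ⟨1, Finset.mem_Icc.mpr ⟨le_refl 1, hm1⟩⟩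
        have hS : 0 < ∑ k ∈ Finset.Icc 1 (m - 1), (Complex.normSq (z + (k : ℂ)))⁻¹ :=
          Finset.sum_pos hpos' hne'
        have hmul : -z.im * ∑ k ∈ Finset.Icc 1 (m - 1),
            (Complex.normSq (z + (k : ℂ)))⁻¹ = 0 := by
          rw [Finset.mul_sum, ← h0]
          exact Finset.sum_congr rfl fun k hk => (div_eq_mul_inv _ _).symm
        rcases mul_eq_zero.mp hmul with h | h
        · exact him (neg_eq_zero.mp h)
        · exact hS.ne' h
      -- now z is real
      set x := z.re with hx
      have hzx : z = (x : ℂ) := Complex.ext rfl (by simp [him])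
      -- real product equation
      have hR : ∏ k ∈ Finset.Icc 1 (m - 1), (x + (k : ℝ)) = (m.factorial : ℝ) := by
        have : ((∏ k ∈ Finset.Icc 1 (m - 1), (x + (k : ℝ)) : ℝ) : ℂ)
            = ((m.factorial : ℝ) : ℂ) := by
          push_cast
          rw [← hzp, hzx]
        exact_mod_cast this
      have hnzR : ∀ k ∈ Finset.Icc 1 (m - 1), x + (k : ℝ) ≠ 0 := by
        intro k hk h0
        apply hnz k hk
        have := congrArg (fun t : ℝ => (t : ℂ)) h0
        push_cast at this
        rw [hzx]
        exact this
      -- real sum equation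
      have hsumR : ∑ k ∈ Finset.Icc 1 (m - 1), (x + (k : ℝ))⁻¹ = 0 := by
        have : ((∑ k ∈ Finset.Icc 1 (m - 1), (x + (k : ℝ))⁻¹ : ℝ) : ℂ) = 0 := by
          push_cast
          rw [← hsum, hzx]
        exact_mod_cast this
      -- sign analysis
      have hneg : ∃ k ∈ Finset.Icc 1 (m - 1), x + (k : ℝ) < 0 := by
        by_contra h
        push_neg at h
        have hposall : ∀ k ∈ Finset.Icc 1 (m - 1), 0 < (x + (k : ℝ))⁻¹ := by
          intro k hk
          have := lt_of_le_of_ne (h k hk) (Ne.symm (hnzR k hk))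
          positivity
        have := Finset.sum_pos hposall ⟨1, Finset.mem_Icc.mpr ⟨le_refl 1, hm1⟩⟩
        rw [hsumR] at this
        exact lt_irrefl _ this
      have hposex : ∃ k ∈ Finset.Icc 1 (m - 1), 0 < x + (k : ℝ) := by
        by_contra h
        push_neg at h
        have hnegall : ∀ k ∈ Finset.Icc 1 (m - 1), (x + (k : ℝ))⁻¹ < 0 := by
          intro k hk
          have := lt_of_le_of_ne (h k hk) (hnzR k hk)
          exact inv_lt_zero.mpr this
        have := Finset.sum_neg hnegall ⟨1, Finset.mem_Icc.mpr ⟨le_refl 1, hm1⟩⟩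
        rw [hsumR] at this
        exact lt_irrefl _ this
      obtain ⟨k1, hk1, hk1n⟩ := hneg
      obtain ⟨k2, hk2, hk2p⟩ := hposex
      simp only [Finset.mem_Icc] at hk1 hk2
      have hx1 : x < -1 := by
        have : (1 : ℝ) ≤ (k1 : ℝ) := by exact_mod_cast hk1.1
        linarith
      have hx2 : -((m : ℝ) - 1) < x := by
        have : (k2 : ℝ) ≤ (m : ℝ) - 1 := by
          have := hk2.2
          have h2 : (k2 : ℝ) ≤ ((m - 1 : ℕ) : ℝ) := by exact_mod_cast this
          rwa [Nat.cast_sub (by omega), Nat.cast_one] at h2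
        linarith
      -- the floor j
      set j := Nat.floor (-x) with hj
      have hxneg : (0 : ℝ) < -x := by linarith
      have hjle : (j : ℝ) ≤ -x := Nat.floor_le hxneg.le
      have hjlt : -x < (j : ℝ) + 1 := Nat.lt_floor_add_one (-x)
      have hj1 : 1 ≤ j := Nat.le_floor (by push_cast; linarith)
      have hjm : j ≤ m - 2 := by
        have : (j : ℝ) < (m : ℝ) - 1 := lt_of_le_of_lt hjle (by linarith)
        have h2 : (j : ℝ) < ((m - 1 : ℕ) : ℝ) := by
          rwa [Nat.cast_sub (by omega), Nat.cast_one]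
        have := Nat.cast_lt.mp h2
        omega
      have hjmem : j ∈ Finset.Icc 1 (m - 1) := Finset.mem_Icc.mpr ⟨hj1, by omega⟩
      have hxj : x < -(j : ℝ) := by
        rcases lt_or_eq_of_le (by linarith : x ≤ -(j : ℝ)) with h | h
        · exact h
        · exfalso; exact hnzR j hjmem (by rw [h]; ring)
      have hxj1 : -((j : ℝ) + 1) < x := by linarith
      -- bound the product
      have habsR : ∏ k ∈ Finset.Icc 1 (m - 1), |x + (k : ℝ)| = (m.factorial : ℝ) := by
        rw [← Finset.abs_prod, hR, abs_of_pos]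
        exact_mod_cast m.factorial_pos
      set b : ℕ → ℝ := fun k => if k ≤ j then (j : ℝ) + 1 - k else (k : ℝ) - j with hb
      have hblt : ∏ k ∈ Finset.Icc 1 (m - 1), |x + (k : ℝ)|
          < ∏ k ∈ Finset.Icc 1 (m - 1), b k := by
        refine Finset.prod_lt_prod (fun k hk => abs_pos.mpr (hnzR k hk)) (fun k hk => ?_) ?_
        · simp only [Finset.mem_Icc] at hk
          by_cases hkj : k ≤ j
          · have hkr : (k : ℝ) ≤ (j : ℝ) := by exact_mod_cast hkj
            have hneg' : x + (k : ℝ) < 0 := by linarith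
            rw [hb]
            simp only [hkj, if_true]
            rw [abs_of_neg hneg']
            linarith
          · push_neg at hkj
            have hkr : (j : ℝ) + 1 ≤ (k : ℝ) := by exact_mod_cast hkj
            have hpos' : 0 < x + (k : ℝ) := by linarith
            rw [hb]
            simp only [not_le.mpr hkj, if_false]
            rw [abs_of_pos hpos']
            linarith
        · refine ⟨m - 1, Finset.mem_Icc.mpr ⟨hm1, le_refl _⟩, ?_⟩
          have hkj : ¬ (m - 1 ≤ j) := by omega
          have hkr : (j : ℝ) + 1 ≤ ((m - 1 : ℕ) : ℝ) := by
            have : j + 1 ≤ m - 1 := by omega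
            exact_mod_cast this
          have hpos' : 0 < x + ((m - 1 : ℕ) : ℝ) := by linarith
          rw [hb]
          simp only [hkj, if_false]
          rw [abs_of_pos hpos']
          linarith
      -- compute the bounding product
      have hbprod : ∏ k ∈ Finset.Icc 1 (m - 1), b k
          = (j.factorial : ℝ) * ((m - 1 - j).factorial : ℝ) := by
        have hsplit : Finset.Icc 1 (m - 1) = Finset.Ioc 0 (m - 1) := Finset.Icc_add_one_left_eq_Ioc 0 (m-1)
        rw [hsplit, ← Finset.prod_Ioc_consecutive b (Nat.zero_le j) (by omega : j ≤ m - 1)]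
        congr 1
        · rw [← prod_Ioc_reflect j]
          refine Finset.prod_congr rfl fun k hk => ?_
          simp only [Finset.mem_Ioc] at hk
          rw [hb]; simp only [hk.2, if_true]
        · have hrw : Finset.Ioc j (m - 1) = Finset.Ioc j (j + (m - 1 - j)) := by
            congr 1
            omega
          rw [hrw, ← prod_Ioc_sub j (m - 1 - j)]
          refine Finset.prod_congr rfl fun k hk => ?_
          simp only [Finset.mem_Ioc] at hk
          have : ¬ (k ≤ j) := by omega
          rw [hb]; simp only [this, if_false]
      have hfle : j.factorial * (m - 1 - j).factorial ≤ (m - 1).factorial := by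
        have hdvd : j.factorial * (m - 1 - j).factorial ∣ (m - 1).factorial :=
          Nat.factorial_mul_factorial_dvd_factorial (by omega : j ≤ m - 1)
        exact Nat.le_of_dvd (m - 1).factorial_pos hdvd
      have hflt : (m - 1).factorial < m.factorial :=
        (Nat.factorial_lt (n := m - 1) (m := m) (by omega)).mpr (by omega)
      have : (m.factorial : ℝ) < (m.factorial : ℝ) := by
        calc (m.factorial : ℝ) = ∏ k ∈ Finset.Icc 1 (m - 1), |x + (k : ℝ)| := habsR.symm
          _ < ∏ k ∈ Finset.Icc 1 (m - 1), b k := hblt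
          _ = (j.factorial : ℝ) * ((m - 1 - j).factorial : ℝ) := hbprod
          _ ≤ ((m - 1).factorial : ℝ) := by exact_mod_cast hfle
          _ < (m.factorial : ℝ) := by exact_mod_cast hflt
      exact lt_irrefl _ this
    -- conclude multiplicity = 1
    have hnot : ¬ (1 < (chiPoly m).rootMultiplicity z) := by
      rw [one_lt_rootMultiplicity_iff_isRoot hne]
      rintro ⟨-, h⟩
      exact hder h
    omega
  exact ⟨hroot1, partb, partc⟩
end

section
/- Fix an integer m ≥ 2 and let λ ∈ ℂ satisfy ∏_{k=1}^{m−1} (λ + k) = m! and Re(λ) > −1/2. Let C ∈ ℂ and let Z^{(1)}, …, Z^{(m)} be independent, identically distributed complex random variables with E[Z^{(i)}] = C and E|Z^{(i)}|² < ∞, independent of T. Then the complex random variable Y = e^{−λT}(Z^{(1)} + ⋯ + Z^{(m)}) satisfies E[Y] = C and E|Y|² < ∞. -/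
open MeasureTheory ProbabilityTheory

/-- The exponential distribution with rate `j`, given by its density
`x ↦ j e^{-jx}` on `(0,∞)`. -/
noncomputable def expLaw (j : ℕ) : Measure ℝ :=
  volume.withDensity (fun x => ENNReal.ofReal (if 0 < x then j * Real.exp (-(j * x)) else 0))

/-- The law of `T = τ₍₁₎ + ⋯ + τ₍ₘ₋₁₎`, where the `τ₍ⱼ₎` are independent and
`τ₍ⱼ₎` is exponential of rate `j`. -/
noncomputable def lawT (m : ℕ) : Measure ℝ :=
  Measure.map (fun x => ∑ j, x j) (Measure.pi (fun j : Fin (m - 1) => expLaw ((j : ℕ) + 1)))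

/-- A probability law `μZ` on `ℂ` solves the fixed point equation
`Z =_d e^{-λT}(Z⁽¹⁾ + ⋯ + Z⁽ᵐ⁾)` if, whenever `T, Z⁽¹⁾, …, Z⁽ᵐ⁾` are independent
(i.e. their joint law is the product measure), with `T` as above and each `Z⁽ⁱ⁾` of
law `μZ`, the law of `e^{-λT}(Z⁽¹⁾ + ⋯ + Z⁽ᵐ⁾)` is again `μZ`. -/
def SolvesFP (m : ℕ) (lam : ℂ) (μZ : Measure ℂ) : Prop :=
  Measure.map (fun p : ℝ × (Fin m → ℂ) => Complex.exp (-lam * p.1) * ∑ i, p.2 i)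
    ((lawT m).prod (Measure.pi fun _ : Fin m => μZ)) = μZ

section Aux

open Real Set Filter Topology MeasureTheory.Measure
open scoped ENNReal NNReal

lemma cexp_norm (b : ℂ) (x : ℝ) : ‖Complex.exp (-b * x)‖ = Real.exp (-b.re * x) := by
  rw [Complex.norm_exp]
  norm_num [Complex.mul_re]

lemma cexp_integrableOn_Ioi (b : ℂ) (hb : 0 < b.re) :
    IntegrableOn (fun x : ℝ => Complex.exp (-b * x)) (Ioi 0) := by
  refine (exp_neg_integrableOn_Ioi 0 hb).mono' ?_ ?_
  · exact (Complex.continuous_exp.comp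
      (continuous_const.mul Complex.continuous_ofReal)).aestronglyMeasurable
  · filter_upwards with x
    rw [cexp_norm]

lemma integral_cexp_Ioi (b : ℂ) (hb : 0 < b.re) :
    ∫ x in Ioi (0:ℝ), Complex.exp (-b * x) = 1 / b := by
  have hb' : b ≠ 0 := by contrapose! hb; rw [hb, Complex.zero_re]
  have A : ∀ x : ℂ, HasDerivAt (fun x => -b⁻¹ * Complex.exp (-b * x))
      (Complex.exp (-b * x)) x := by
    intro x
    refine (((hasDerivAt_id x).const_mul (-b)).cexp.const_mul (-b⁻¹)).congr_deriv ?_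
    simp only [id, mul_one]
    field_simp
  have B : Tendsto (fun y : ℝ => -b⁻¹ * Complex.exp (-b * y)) atTop (𝓝 (-b⁻¹ * 0)) := by
    refine Tendsto.const_mul _ (tendsto_zero_iff_norm_tendsto_zero.mpr ?_)
    simp_rw [cexp_norm]
    exact Real.tendsto_exp_atBot.comp (tendsto_id.const_mul_atTop_of_neg (by linarith))
  have := integral_Ioi_of_hasDerivAt_of_tendsto' (fun x _ => (A ↑x).comp_ofReal)
    (cexp_integrableOn_Ioi b hb) B
  rw [this]
  simp [hb', one_div]

lemma rho_meas (j : ℕ) :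
    Measurable (fun x : ℝ => if 0 < x then j * Real.exp (-(j * x)) else 0) := by
  refine Measurable.ite measurableSet_Ioi ?_ measurable_const
  fun_prop

lemma rho_nonneg (j : ℕ) (x : ℝ) : 0 ≤ (if 0 < x then j * Real.exp (-(j * x)) else 0) := by
  split <;> positivity

lemma expLaw_smul_eq (j : ℕ) (c : ℂ) (x : ℝ) :
    ((if 0 < x then (j:ℝ) * Real.exp (-(j * x)) else 0).toNNReal) • Complex.exp (-c * x)
      = (Ioi (0:ℝ)).indicator (fun x => (j:ℂ) * Complex.exp (-(c + j) * x)) x := by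
  rw [NNReal.smul_def, Real.coe_toNNReal _ (rho_nonneg j x), Set.indicator_apply]
  simp only [mem_Ioi]
  split_ifs with h
  · rw [Complex.real_smul]
    push_cast
    rw [mul_assoc, ← Complex.exp_add]
    ring_nf
  · simp

lemma expLaw_integrable_cexp (j : ℕ) (c : ℂ) (hc : 0 < c.re + j) :
    Integrable (fun x : ℝ => Complex.exp (-c * x)) (expLaw j) := by
  rw [expLaw]
  rw [show (fun x : ℝ => ENNReal.ofReal (if 0 < x then (j:ℝ) * Real.exp (-(j * x)) else 0))
      = fun x => ((if 0 < x then (j:ℝ) * Real.exp (-(j * x)) else 0).toNNReal : ℝ≥0∞) from rfl]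
  rw [integrable_withDensity_iff_integrable_smul (by exact (rho_meas j).real_toNNReal)]
  have : (fun x : ℝ =>
        ((if 0 < x then (j:ℝ) * Real.exp (-(j * x)) else 0).toNNReal) • Complex.exp (-c * x))
      = (Ioi (0:ℝ)).indicator (fun x => (j:ℂ) * Complex.exp (-(c + j) * x)) := by
    funext x; exact expLaw_smul_eq j c x
  rw [this, integrable_indicator_iff measurableSet_Ioi]
  exact ((cexp_integrableOn_Ioi (c + j) (by simpa using hc)).const_mul _)

lemma expLaw_integral_cexp (j : ℕ) (c : ℂ) (hc : 0 < c.re + j) :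
    ∫ x, Complex.exp (-c * x) ∂expLaw j = j / (c + j) := by
  rw [expLaw]
  rw [show (fun x : ℝ => ENNReal.ofReal (if 0 < x then (j:ℝ) * Real.exp (-(j * x)) else 0))
      = fun x => ((if 0 < x then (j:ℝ) * Real.exp (-(j * x)) else 0).toNNReal : ℝ≥0∞) from rfl]
  rw [integral_withDensity_eq_integral_smul (by exact (rho_meas j).real_toNNReal)]
  have : (fun x : ℝ =>
        ((if 0 < x then (j:ℝ) * Real.exp (-(j * x)) else 0).toNNReal) • Complex.exp (-c * x))
      = (Ioi (0:ℝ)).indicator (fun x => (j:ℂ) * Complex.exp (-(c + j) * x)) := by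
    funext x; exact expLaw_smul_eq j c x
  rw [this, integral_indicator measurableSet_Ioi, integral_const_mul,
    integral_cexp_Ioi (c + j) (by simpa using hc)]
  ring

lemma expLaw_lintegral_exp_lt_top (j : ℕ) (a : ℝ) (ha : 0 < a + j) :
    ∫⁻ x, ENNReal.ofReal (Real.exp (-a * x)) ∂expLaw j < ⊤ := by
  rw [expLaw, lintegral_withDensity_eq_lintegral_mul _
      (by exact (rho_meas j).ennreal_ofReal) (by fun_prop)]
  have heq : ((fun x : ℝ => ENNReal.ofReal (if 0 < x then (j:ℝ) * Real.exp (-(j * x)) else 0))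
        * fun x => ENNReal.ofReal (Real.exp (-a * x)))
      = (Ioi (0:ℝ)).indicator
          (fun x => ENNReal.ofReal ((j:ℝ) * Real.exp (-(a + j) * x))) := by
    funext x
    simp only [Pi.mul_apply, Set.indicator_apply, mem_Ioi]
    split_ifs with h
    · rw [← ENNReal.ofReal_mul (by positivity)]
      congr 1
      rw [mul_assoc, ← Real.exp_add]
      ring_nf
    · simp
  rw [heq, lintegral_indicator measurableSet_Ioi _]
  have hint : IntegrableOn (fun x : ℝ => (j:ℝ) * Real.exp (-(a + j) * x)) (Ioi 0) :=
    (exp_neg_integrableOn_Ioi 0 (by linarith)).const_mul _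
  exact hint.lintegral_lt_top

lemma lintegral_pi_prod {n : ℕ} {X : Type*} [MeasurableSpace X]
    (μ : Fin n → Measure X) [∀ i, SigmaFinite (μ i)]
    (f : Fin n → X → ℝ≥0∞) (hf : ∀ i, Measurable (f i)) :
    ∫⁻ x, ∏ i, f i (x i) ∂Measure.pi μ = ∏ i, ∫⁻ x, f i x ∂μ i := by
  induction n with
  | zero => simp [lintegral_const, Measure.pi_univ]
  | succ n ih =>
      have hmp := (measurePreserving_piFinSuccAbove μ 0).symm
      have hF : Measurable fun x : Fin (n+1) → X => ∏ i, f i (x i) :=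
        Finset.measurable_prod _ fun i _ => (hf i).comp (measurable_pi_apply i)
      rw [← hmp.lintegral_comp hF]
      simp_rw [MeasurableEquiv.piFinSuccAbove_symm_apply, Fin.insertNthEquiv,
        Fin.prod_univ_succ, Fin.insertNth_zero, Equiv.coe_fn_mk,
        Fin.zero_succAbove, cast_eq, Fin.cons_zero, Fin.cons_succ]
      have h2 := ih (fun i => μ i.succ) (fun i => f i.succ) (fun i => hf i.succ)
      exact (lintegral_prod_mul (f := f 0)
        (g := fun y : Fin n → X => ∏ i : Fin n, f i.succ (y i)) (hf 0).aemeasurable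
        ((Finset.measurable_prod Finset.univ (fun i _ =>
          (hf i.succ).comp (measurable_pi_apply i))).aemeasurable)).trans (by rw [h2])

lemma integral_pi_prod {n : ℕ} {X : Type*} [MeasurableSpace X]
    (μ : Fin n → Measure X) [∀ i, SigmaFinite (μ i)]
    (f : Fin n → X → ℂ) :
    ∫ x, ∏ i, f i (x i) ∂Measure.pi μ = ∏ i, ∫ x, f i x ∂μ i := by
  induction n with
  | zero => simp [integral_const, Measure.pi_univ, measureReal_def]
  | succ n ih =>
      rw [← ((measurePreserving_piFinSuccAbove μ 0).symm).integral_comp']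
      simp_rw [MeasurableEquiv.piFinSuccAbove_symm_apply, Fin.insertNthEquiv,
        Fin.prod_univ_succ, Fin.insertNth_zero, Equiv.coe_fn_mk,
        Fin.zero_succAbove, cast_eq, Fin.cons_zero, Fin.cons_succ]
      have h2 := ih (fun i => μ i.succ) (fun i => f i.succ)
      exact (integral_prod_mul (f 0) (fun y : Fin n → X => ∏ i : Fin n, f i.succ (y i))).trans
        (by rw [h2])

lemma expLaw_eq_expMeasure (j : ℕ) : expLaw j = expMeasure j := by
  rw [expLaw, expMeasure, gammaMeasure]
  refine withDensity_congr_ae ?_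
  have h0 : (volume : Measure ℝ) {0} = 0 := volume_singleton
  filter_upwards [compl_mem_ae_iff.mpr h0] with x hx
  have hx' : x ≠ 0 := hx
  have : gammaPDF 1 (j:ℝ) x = exponentialPDF j x := rfl
  rw [this, exponentialPDF_eq]
  congr 1
  rcases lt_trichotomy x 0 with h | h | h
  · rw [if_neg (by linarith), if_neg (by linarith)]
  · exact absurd h hx'
  · rw [if_pos h, if_pos h.le]

lemma expLaw_prob (j : ℕ) (hj : 0 < j) : IsProbabilityMeasure (expLaw j) := by
  rw [expLaw_eq_expMeasure]
  exact isProbabilityMeasure_expMeasure (by exact_mod_cast hj)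

instance expLaw_prob' (j : ℕ) : IsProbabilityMeasure (expLaw (j + 1)) :=
  expLaw_prob _ (Nat.succ_pos _)

lemma map_eval_pi_prob {m : ℕ} (μZ : Measure ℂ) [IsProbabilityMeasure μZ] (i : Fin m) :
    Measure.map (fun z : Fin m → ℂ => z i) (Measure.pi fun _ => μZ) = μZ := by
  refine Measure.ext fun s hs => ?_
  rw [Measure.map_apply (measurable_pi_apply i) hs]
  have : (fun z : Fin m → ℂ => z i) ⁻¹' s
      = Set.pi Set.univ (Function.update (fun _ => Set.univ) i s) := by
    rw [Set.eval_preimage]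
  rw [this, Measure.pi_pi]
  simp [Function.update_apply, apply_ite, Finset.prod_ite_eq']

lemma sum_meas (n : ℕ) : Measurable (fun x : Fin n → ℝ => ∑ j, x j) :=
  Finset.measurable_sum _ fun i _ => measurable_pi_apply i

instance lawT_prob (m : ℕ) : IsProbabilityMeasure (lawT m) := by
  rw [lawT]
  exact isProbabilityMeasure_map (sum_meas _).aemeasurable

lemma lawT_integral_cexp (m : ℕ) (c : ℂ) (hc : -1 < c.re) :
    ∫ t, Complex.exp (-c * t) ∂lawT m
      = ∏ k ∈ Finset.range (m - 1), ((k:ℂ) + 1) / (c + (k:ℂ) + 1) := by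
  rw [lawT, integral_map (sum_meas _).aemeasurable
    (Continuous.aestronglyMeasurable (by fun_prop))]
  have hps : (fun x : Fin (m-1) → ℝ => Complex.exp (-c * ↑(∑ j, x j)))
      = fun x => ∏ j, Complex.exp (-c * x j) := by
    funext x
    rw [← Complex.exp_sum]
    congr 1
    push_cast
    rw [Finset.mul_sum]
  rw [hps, integral_pi_prod _ (fun _ (x : ℝ) => Complex.exp (-c * x))]
  rw [Fin.prod_univ_eq_prod_range (fun j => ∫ x, Complex.exp (-c * x) ∂expLaw (j+1)) (m-1)]
  refine Finset.prod_congr rfl fun k _ => ?_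
  rw [expLaw_integral_cexp (k+1) c (by push_cast; linarith)]
  push_cast
  ring_nf

lemma lawT_lintegral_exp_lt_top (m : ℕ) (a : ℝ) (ha : -1 < a) :
    ∫⁻ t, ENNReal.ofReal (Real.exp (-a * t)) ∂lawT m < ⊤ := by
  rw [lawT, lintegral_map (by fun_prop) (sum_meas _)]
  have hps : (fun x : Fin (m-1) → ℝ => ENNReal.ofReal (Real.exp (-a * ∑ j, x j)))
      = fun x => ∏ j, ENNReal.ofReal (Real.exp (-a * x j)) := by
    funext x
    rw [← ENNReal.ofReal_prod_of_nonneg (fun i _ => (Real.exp_pos _).le), ← Real.exp_sum]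
    congr 2
    rw [Finset.mul_sum]
  rw [hps, lintegral_pi_prod _ (fun _ x => ENNReal.ofReal (Real.exp (-a * x)))
    (fun i => by fun_prop)]
  refine ENNReal.prod_lt_top fun j _ => ?_
  exact expLaw_lintegral_exp_lt_top ((j:ℕ)+1) a (by push_cast; linarith)

end Aux
section Main

open Real Set Filter Topology MeasureTheory.Measure
open scoped ENNReal NNReal

/-- If `λ` is a root of the characteristic polynomial with `Re λ > -1/2`, and the
`Z⁽ⁱ⁾` are i.i.d. of mean `C` with finite second absolute moment, independent of `T`,
then `Y = e^{-λT}(Z⁽¹⁾ + ⋯ + Z⁽ᵐ⁾)` has mean `C` and finite second absolute moment. -/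
theorem stmt5 (m : ℕ) (hm : 2 ≤ m) (lam : ℂ)
    (hroot : ∏ k ∈ Finset.range (m - 1), (lam + (k : ℂ) + 1) = (m.factorial : ℂ))
    (hre : -(1 / 2) < lam.re) (C : ℂ)
    (μZ : Measure ℂ) [IsProbabilityMeasure μZ]
    (hmom : ∫⁻ z, ENNReal.ofReal (‖z‖ ^ 2) ∂μZ < ⊤)
    (hmean : ∫ z, z ∂μZ = C) :
    (∫ w, w ∂(Measure.map (fun p : ℝ × (Fin m → ℂ) => Complex.exp (-lam * p.1) * ∑ i, p.2 i)
        ((lawT m).prod (Measure.pi fun _ : Fin m => μZ))) = C) ∧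
    (∫⁻ w, ENNReal.ofReal (‖w‖ ^ 2)
        ∂(Measure.map (fun p : ℝ × (Fin m → ℂ) => Complex.exp (-lam * p.1) * ∑ i, p.2 i)
        ((lawT m).prod (Measure.pi fun _ : Fin m => μZ))) < ⊤) := by
  have hre1 : -1 < lam.re := by linarith [hre]
  have hre2 : -1 < 2 * lam.re := by nlinarith [hre]
  set piZ := (Measure.pi fun _ : Fin m => μZ) with hpiZ
  have hmC : (m : ℂ) ≠ 0 := by
    simp only [ne_eq, Nat.cast_eq_zero]; omega
  -- rewrite abs as norm in hmom
  have habs : ∀ z : ℂ, ENNReal.ofReal (‖z‖ ^ 2) = ((‖z‖₊ : ℝ≥0∞))^2 := by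
    intro z
    rw [← ENNReal.ofReal_coe_nnreal, coe_nnnorm, ← ENNReal.ofReal_pow (norm_nonneg _)]
  have hmom' : ∫⁻ z, ((‖z‖₊ : ℝ≥0∞))^2 ∂μZ < ⊤ := by
    refine lt_of_eq_of_lt ?_ hmom
    exact lintegral_congr fun z => (habs z).symm
  -- integrability of identity on μZ
  have hZint : Integrable (fun z : ℂ => z) μZ := by
    refine ⟨aestronglyMeasurable_id, ?_⟩
    have hb : ∀ z : ℂ, (‖z‖₊ : ℝ≥0∞) ≤ 1 + ((‖z‖₊ : ℝ≥0∞))^2 := by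
      intro z
      rcases le_total ((‖z‖₊ : ℝ≥0∞)) 1 with h | h
      · exact le_trans h le_self_add
      · refine le_trans ?_ le_add_self
        calc (‖z‖₊ : ℝ≥0∞) = (‖z‖₊ : ℝ≥0∞) * 1 := (mul_one _).symm
        _ ≤ (‖z‖₊ : ℝ≥0∞) * (‖z‖₊ : ℝ≥0∞) := mul_le_mul_right h _
        _ = _ := (sq _).symm
    calc ∫⁻ z, (‖z‖₊ : ℝ≥0∞) ∂μZ ≤ ∫⁻ z, 1 + ((‖z‖₊ : ℝ≥0∞))^2 ∂μZ := lintegral_mono hb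
    _ = 1 + ∫⁻ z, ((‖z‖₊ : ℝ≥0∞))^2 ∂μZ := by
        rw [lintegral_add_left measurable_const, lintegral_const, measure_univ, mul_one]
    _ < ⊤ := by
        rw [ENNReal.add_lt_top]
        exact ⟨ENNReal.one_lt_top, hmom'⟩
  -- coordinates
  have hmapev : ∀ i : Fin m, Measure.map (fun z : Fin m → ℂ => z i) piZ = μZ :=
    fun i => map_eval_pi_prob μZ i
  have hcoordint : ∀ i : Fin m, Integrable (fun z : Fin m → ℂ => z i) piZ := by
    intro i
    have h1 : Integrable (fun z : ℂ => z) (Measure.map (fun z : Fin m → ℂ => z i) piZ) := by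
      rw [hmapev i]; exact hZint
    exact (integrable_map_measure aestronglyMeasurable_id
      (measurable_pi_apply i).aemeasurable).mp h1
  have hcoordmean : ∀ i : Fin m, ∫ z : Fin m → ℂ, z i ∂piZ = C := by
    intro i
    rw [← hmean, ← hmapev i,
      integral_map (measurable_pi_apply i).aemeasurable
      ((aestronglyMeasurable_id :
        AEStronglyMeasurable (fun w : ℂ => w) (Measure.map (fun z : Fin m → ℂ => z i) piZ)))]
  -- mean of e^{-lam T}
  have hTmean : ∫ t, Complex.exp (-lam * t) ∂lawT m = 1 / (m : ℂ) := by
    rw [lawT_integral_cexp m lam hre1, Finset.prod_div_distrib]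
    have hfac : ∏ k ∈ Finset.range (m-1), ((k:ℂ) + 1) = ((m-1).factorial : ℂ) := by
      norm_cast
      exact Finset.prod_range_add_one_eq_factorial (m-1)
    rw [hfac, hroot]
    have hfacm : (m.factorial : ℂ) = (m : ℂ) * ((m-1).factorial : ℂ) := by
      rw [← Nat.cast_mul]
      congr 1
      rw [Nat.mul_factorial_pred (by omega)]
    rw [hfacm]
    have hne : ((m-1).factorial : ℂ) ≠ 0 := by
      simp [Nat.factorial_ne_zero]
    field_simp
  -- measurability of main map
  have hmeasF : Measurable (fun p : ℝ × (Fin m → ℂ) =>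
      Complex.exp (-lam * p.1) * ∑ i, p.2 i) := by
    apply Measurable.mul
    · fun_prop
    · exact (Finset.measurable_sum _ fun i _ =>
        (measurable_pi_apply i).comp measurable_snd)
  have hAbsMeas : Measurable (fun w : ℂ => ENNReal.ofReal (‖w‖ ^ 2)) := by
    fun_prop
  constructor
  · have hkey : (∫ w, w ∂(Measure.map
          (fun p : ℝ × (Fin m → ℂ) => Complex.exp (-lam * p.1) * ∑ i, p.2 i)
          ((lawT m).prod piZ)))
        = ∫ p : ℝ × (Fin m → ℂ), Complex.exp (-lam * p.1) * ∑ i, p.2 i ∂((lawT m).prod piZ) :=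
      integral_map hmeasF.aemeasurable aestronglyMeasurable_id
    rw [hkey]
    have := integral_prod_mul (μ := lawT m) (ν := piZ)
      (fun t : ℝ => Complex.exp (-lam * t)) (fun z : Fin m → ℂ => ∑ i, z i)
    rw [this, hTmean, integral_finset_sum Finset.univ (fun i _ => hcoordint i)]
    simp only [hcoordmean, Finset.sum_const, Finset.card_univ, Fintype.card_fin, nsmul_eq_mul]
    field_simp
  · rw [lintegral_map hAbsMeas hmeasF]
    have hpt : ∀ p : ℝ × (Fin m → ℂ),
        ENNReal.ofReal (‖Complex.exp (-lam * p.1) * ∑ i, p.2 i‖ ^ 2)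
          = ENNReal.ofReal (Real.exp (-(2*lam.re) * p.1))
            * ENNReal.ofReal (‖∑ i, p.2 i‖ ^ 2) := by
      intro p
      rw [norm_mul, mul_pow, ENNReal.ofReal_mul (by positivity)]
      congr 2
      rw [Complex.norm_exp]
      have : (-lam * (p.1:ℂ)).re = -lam.re * p.1 := by
        simp [Complex.mul_re]
      rw [this, sq, ← Real.exp_add]
      ring_nf
    rw [lintegral_congr hpt]
    have hfacto := lintegral_prod_mul (μ := lawT m) (ν := piZ)
      (f := fun t : ℝ => ENNReal.ofReal (Real.exp (-(2*lam.re) * t)))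
      (g := fun z : Fin m → ℂ => ENNReal.ofReal (‖∑ i, z i‖ ^ 2))
      (by fun_prop)
      ((hAbsMeas.comp (Finset.measurable_sum _ fun i _ => measurable_pi_apply i)).aemeasurable)
    rw [hfacto]
    -- second factor finite
    have hcoordlint : ∀ i : Fin m,
        ∫⁻ z : Fin m → ℂ, ENNReal.ofReal (‖z i‖ ^ 2) ∂piZ
          = ∫⁻ w, ENNReal.ofReal (‖w‖ ^ 2) ∂μZ := by
      intro i
      rw [← hmapev i, lintegral_map hAbsMeas (measurable_pi_apply i)]
    have hbound : ∀ z : Fin m → ℂ,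
        ENNReal.ofReal (‖∑ i, z i‖ ^ 2)
          ≤ (m : ℝ≥0∞) * ∑ i, ENNReal.ofReal (‖z i‖ ^ 2) := by
      intro z
      have h1 : ‖∑ i, z i‖ ^ 2 ≤ (m:ℝ) * ∑ i, ‖z i‖ ^ 2 := by
        have hA : ‖∑ i, z i‖ ≤ ∑ i, ‖z i‖ := by
          simpa using norm_sum_le Finset.univ z
        calc ‖∑ i, z i‖ ^ 2 ≤ (∑ i, ‖z i‖) ^ 2 := by
              exact pow_le_pow_left₀ (by positivity) hA 2
        _ ≤ (Finset.univ.card : ℝ) * ∑ i, ‖z i‖ ^ 2 :=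
              sq_sum_le_card_mul_sum_sq
        _ = (m:ℝ) * ∑ i, ‖z i‖ ^ 2 := by
              rw [Finset.card_univ, Fintype.card_fin]
      calc ENNReal.ofReal (‖∑ i, z i‖ ^ 2)
          ≤ ENNReal.ofReal ((m:ℝ) * ∑ i, ‖z i‖ ^ 2) :=
            ENNReal.ofReal_le_ofReal h1
      _ = (m : ℝ≥0∞) * ∑ i, ENNReal.ofReal (‖z i‖ ^ 2) := by
            rw [ENNReal.ofReal_mul (by positivity), ENNReal.ofReal_natCast,
              ENNReal.ofReal_sum_of_nonneg (fun i _ => by positivity)]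
    have hsecond : ∫⁻ z : Fin m → ℂ, ENNReal.ofReal (‖∑ i, z i‖ ^ 2) ∂piZ < ⊤ := by
      refine lt_of_le_of_lt (lintegral_mono hbound) ?_
      rw [lintegral_const_mul
        (f := fun z : Fin m → ℂ => ∑ i, ENNReal.ofReal (‖z i‖ ^ 2)) _
        (by exact Finset.measurable_sum _ fun i _ => hAbsMeas.comp (measurable_pi_apply i))]
      rw [lintegral_finset_sum
        (f := fun (i : Fin m) (z : Fin m → ℂ) => ENNReal.ofReal (‖z i‖ ^ 2)) _
        (fun i _ => by exact hAbsMeas.comp (measurable_pi_apply i))]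
      simp only [hcoordlint]
      refine ENNReal.mul_lt_top (by simp) ?_
      exact ENNReal.sum_lt_top.mpr fun i _ => hmom
    exact ENNReal.mul_lt_top (lawT_lintegral_exp_lt_top m (2*lam.re) hre2) hsecond

end Main
end

section
/- Fix an integer m ≥ 2 and λ ∈ ℂ with Re(λ) > 1/2. Let φ and ψ be the characteristic functions of two complex random variables X and Y, i.e. φ(t) = E e^{i⟨t,X⟩} and ψ(t) = E e^{i⟨t,Y⟩} for t ∈ ℂ, where ⟨x,y⟩ = Re(x̄y). Then for every t ∈ ℂ with t ≠ 0, |E[φ^m(e^{−λ̄ T} t)] − E[ψ^m(e^{−λ̄ T} t)]| / |t|² ≤ m · E[e^{−2 Re(λ) T}] · sup_{s ≠ 0} |φ(s) − ψ(s)| / |s|², and moreover m · E[e^{−2 Re(λ) T}] < 1. -/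
open MeasureTheory ProbabilityTheory
open scoped NNReal ENNReal

namespace Stmt7Aux

noncomputable def dens (j : ℕ) (x : ℝ) : ℝ := if 0 < x then j * Real.exp (-(j * x)) else 0

lemma dens_nonneg (j : ℕ) (x : ℝ) : 0 ≤ dens j x := by
  unfold dens; split
  · positivity
  · exact le_refl 0

lemma measurable_dens (j : ℕ) : Measurable (dens j) := by
  unfold dens
  exact Measurable.ite measurableSet_Ioi (by fun_prop) measurable_const

lemma dens_eq_indicator (j : ℕ) (c : ℝ) :
    (fun x => dens j x * Real.exp (-c * x)) =
      Set.indicator (Set.Ioi 0) (fun x => (j : ℝ) * Real.exp (-(((j:ℝ) + c) * x))) := by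
  funext x
  by_cases hx : (0:ℝ) < x
  · rw [Set.indicator_of_mem (Set.mem_Ioi.2 hx)]
    simp only [dens, if_pos hx]
    rw [mul_assoc, ← Real.exp_add]
    ring_nf
  · rw [Set.indicator_of_notMem (by simpa using hx)]
    simp [dens, hx]

lemma integrable_dens_mul (j : ℕ) (c : ℝ) (hjc : 0 < (j : ℝ) + c) :
    Integrable (fun x => dens j x * Real.exp (-c * x)) := by
  rw [dens_eq_indicator]
  rw [integrable_indicator_iff measurableSet_Ioi]
  have := (exp_neg_integrableOn_Ioi 0 hjc).const_mul (j : ℝ)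
  have heq : (fun x : ℝ => (j:ℝ) * Real.exp (-(((j:ℝ)+c) * x)))
      = fun x => (j:ℝ) * Real.exp (-(((j:ℝ)+c)) * x) := by funext x; ring_nf
  rw [heq]; simpa [IntegrableOn] using this

lemma integral_dens_mul (j : ℕ) (c : ℝ) (hjc : 0 < (j : ℝ) + c) :
    ∫ x, dens j x * Real.exp (-c * x) = j / (j + c) := by
  rw [dens_eq_indicator, integral_indicator measurableSet_Ioi, integral_const_mul]
  have := integral_comp_mul_left_Ioi (fun y => Real.exp (-y)) 0 hjc
  simp only [mul_zero, integral_exp_neg_Ioi_zero, smul_eq_mul, mul_one,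
    abs_of_pos (inv_pos.2 hjc)] at this
  rw [this]
  field_simp

lemma expLaw_eq (j : ℕ) :
    expLaw j = volume.withDensity (fun x => ((Real.toNNReal (dens j x) : ℝ≥0) : ℝ≥0∞)) := rfl

lemma integral_exp_expLaw (j : ℕ) (c : ℝ) (hjc : 0 < (j : ℝ) + c) :
    ∫ x, Real.exp (-c * x) ∂(expLaw j) = j / (j + c) := by
  rw [expLaw_eq, integral_withDensity_eq_integral_smul ((measurable_dens j).real_toNNReal)]
  simp_rw [NNReal.smul_def, smul_eq_mul, Real.coe_toNNReal _ (dens_nonneg j _)]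
  exact integral_dens_mul j c hjc

lemma integrable_exp_expLaw (j : ℕ) (c : ℝ) (hjc : 0 < (j : ℝ) + c) :
    Integrable (fun x => Real.exp (-c * x)) (expLaw j) := by
  rw [expLaw_eq,
    integrable_withDensity_iff_integrable_coe_smul ((measurable_dens j).real_toNNReal)]
  have := integrable_dens_mul j c hjc
  apply this.congr
  filter_upwards with x
  rw [smul_eq_mul, Real.coe_toNNReal _ (dens_nonneg j x)]

lemma isProb_expLaw (j : ℕ) (hj : 0 < j) : IsProbabilityMeasure (expLaw j) := by
  constructor
  have h0 : (0:ℝ) < (j:ℝ) + 0 := by positivity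
  rw [show expLaw j = volume.withDensity (fun x => ENNReal.ofReal (dens j x)) from rfl,
    withDensity_apply _ MeasurableSet.univ, Measure.restrict_univ,
    ← ofReal_integral_eq_lintegral_ofReal (by simpa using integrable_dens_mul j 0 h0)
      (Filter.Eventually.of_forall (dens_nonneg j))]
  have := integral_dens_mul j 0 h0
  simp only [neg_zero, zero_mul, Real.exp_zero, mul_one, add_zero] at this
  rw [this, div_self (by positivity), ENNReal.ofReal_one]

def ET (m : ℕ) (_i : Fin (m - 1)) : Type := ℝ

def ET.toReal {m : ℕ} {i : Fin (m - 1)} (x : ET m i) : ℝ := x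

noncomputable instance (m : ℕ) (i : Fin (m - 1)) : MeasureSpace (ET m i) :=
  show MeasureSpace ℝ from ⟨expLaw ((i : ℕ) + 1)⟩

instance (m : ℕ) (i : Fin (m - 1)) : IsProbabilityMeasure (volume : Measure (ET m i)) :=
  isProb_expLaw _ (Nat.succ_pos _)

instance (m : ℕ) (i : Fin (m - 1)) : SigmaFinite (volume : Measure (ET m i)) := by
  infer_instance

lemma measurable_sum (m : ℕ) : Measurable (fun x : Fin (m - 1) → ℝ => ∑ j, x j) := by
  fun_prop

instance isProb_lawT (m : ℕ) : IsProbabilityMeasure (lawT m) := by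
  haveI : ∀ i : Fin (m - 1), IsProbabilityMeasure (expLaw ((i : ℕ) + 1)) :=
    fun i => isProb_expLaw _ (Nat.succ_pos _)
  exact Measure.isProbabilityMeasure_map (measurable_sum m).aemeasurable

lemma exp_sum_eq (m : ℕ) (c : ℝ) (x : Fin (m - 1) → ℝ) :
    Real.exp (-c * ∑ j, x j) = ∏ j, Real.exp (-c * x j) := by
  rw [← Real.exp_sum, Finset.mul_sum]

lemma integral_exp_lawT (m : ℕ) (c : ℝ) (hc : 0 ≤ c) :
    ∫ u, Real.exp (-c * u) ∂(lawT m) = ∏ j : Fin (m - 1), ((j : ℝ) + 1) / ((j : ℝ) + 1 + c) := by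
  rw [lawT, integral_map (measurable_sum m).aemeasurable
    (show Measurable fun u : ℝ => Real.exp (-c * u) by fun_prop).aestronglyMeasurable]
  simp_rw [exp_sum_eq m c]
  have key := MeasureTheory.integral_fintype_prod_eq_prod (ι := Fin (m - 1)) (E := ET m)
      (μ := fun i => (volume : Measure (ET m i)))
      (f := fun _ (x : ET m _) => Real.exp (-c * x.toReal))
  have h2 : ∀ i : Fin (m - 1), (∫ x : ET m i, Real.exp (-c * x.toReal))
      = ((i : ℝ) + 1) / ((i : ℝ) + 1 + c) := by
    intro i
    have h := integral_exp_expLaw ((i : ℕ) + 1) c (by positivity)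
    rw [show (∫ x : ET m i, Real.exp (-c * x.toReal))
        = ∫ x, Real.exp (-c * x) ∂(expLaw ((i:ℕ)+1)) from rfl, h]
    push_cast; ring
  simp_rw [h2] at key
  exact key

lemma integrable_exp_lawT (m : ℕ) (c : ℝ) (hc : 0 ≤ c) :
    Integrable (fun u => Real.exp (-c * u)) (lawT m) := by
  rw [lawT, integrable_map_measure
    (show Measurable fun u : ℝ => Real.exp (-c * u) by fun_prop).aestronglyMeasurable
    (measurable_sum m).aemeasurable]
  have key := MeasureTheory.Integrable.fintype_prod_dep (E := ET m)
      (μ := fun i => (volume : Measure (ET m i)))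
      (f := fun _ (x : ET m _) => Real.exp (-c * x.toReal))
      (fun i => integrable_exp_expLaw ((i : ℕ) + 1) c (by positivity))
  have : (fun u => Real.exp (-c * u)) ∘ (fun x : Fin (m-1) → ℝ => ∑ j, x j)
      = fun x : Fin (m-1) → ℝ => ∏ j, Real.exp (-c * x j) := by
    funext x; exact exp_sum_eq m c x
  rw [this]
  exact key

lemma prod_telescope : ∀ n : ℕ, ∏ j ∈ Finset.range n, ((j : ℝ) + 1) / ((j : ℝ) + 2) = 1 / ((n : ℝ) + 1)
  | 0 => by simp
  | n + 1 => by
    rw [Finset.prod_range_succ, prod_telescope n]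
    push_cast
    have h1 : (n : ℝ) + 1 ≠ 0 := by positivity
    have h2 : (n : ℝ) + 2 ≠ 0 := by positivity
    field_simp
    ring

lemma main_lt_one (m : ℕ) (hm : 2 ≤ m) (c : ℝ) (hc : 1 < c) :
    (m : ℝ) * ∏ j : Fin (m - 1), ((j : ℝ) + 1) / ((j : ℝ) + 1 + c) < 1 := by
  have hc0 : 0 ≤ c := by linarith
  have hlt : ∏ j : Fin (m - 1), ((j : ℝ) + 1) / ((j : ℝ) + 1 + c)
      < ∏ j : Fin (m - 1), ((j : ℝ) + 1) / ((j : ℝ) + 2) := by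
    apply Finset.prod_lt_prod_of_nonempty
    · intro i _; positivity
    · intro i _
      apply div_lt_div_of_pos_left (by positivity) (by positivity)
      linarith
    · rw [Finset.univ_nonempty_iff]
      exact Fin.pos_iff_nonempty.1 (by omega)
  have heq : ∏ j : Fin (m - 1), ((j : ℝ) + 1) / ((j : ℝ) + 2) = 1 / (m : ℝ) := by
    rw [Fin.prod_univ_eq_prod_range (fun j => ((j : ℝ) + 1) / ((j : ℝ) + 2)), prod_telescope]
    congr 1
    have : m - 1 + 1 = m := by omega
    rw [← this]; push_cast; ring
  have hm0 : (0:ℝ) < m := by positivity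
  calc (m : ℝ) * ∏ j : Fin (m - 1), ((j : ℝ) + 1) / ((j : ℝ) + 1 + c)
      < (m : ℝ) * (1 / (m : ℝ)) := by rw [← heq]; exact (mul_lt_mul_iff_right₀ hm0).2 hlt
    _ = 1 := by field_simp

lemma prod_pos (m : ℕ) (c : ℝ) (hc : 0 ≤ c) :
    0 < ∏ j : Fin (m - 1), ((j : ℝ) + 1) / ((j : ℝ) + 1 + c) := by
  apply Finset.prod_pos; intro i _; positivity

lemma abs_cexp_I_real (r : ℝ) : ‖Complex.exp (Complex.I * (r : ℂ))‖ = 1 := by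
  rw [Complex.norm_exp]
  simp [Complex.mul_re]

lemma abs_pow_sub_pow_le (a b : ℂ) (ha : ‖a‖ ≤ 1) (hb : ‖b‖ ≤ 1) :
    ∀ n : ℕ, ‖a ^ n - b ^ n‖ ≤ n * ‖a - b‖
  | 0 => by simp
  | n + 1 => by
    have h1 : a ^ (n + 1) - b ^ (n + 1) = a * (a ^ n - b ^ n) + (a - b) * b ^ n := by ring
    have hbn : ‖b ^ n‖ ≤ 1 := by
      rw [norm_pow]; exact pow_le_one₀ (norm_nonneg b) hb
    calc ‖a ^ (n + 1) - b ^ (n + 1)‖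
        ≤ ‖a * (a ^ n - b ^ n)‖ + ‖(a - b) * b ^ n‖ := by
          rw [h1]; exact norm_add_le _ _
      _ = ‖a‖ * ‖a ^ n - b ^ n‖
          + ‖a - b‖ * ‖b ^ n‖ := by rw [norm_mul, norm_mul]
      _ ≤ 1 * (n * ‖a - b‖) + ‖a - b‖ * 1 := by
          exact add_le_add
            (mul_le_mul ha (abs_pow_sub_pow_le a b ha hb n) (norm_nonneg _) zero_le_one)
            (mul_le_mul_of_nonneg_left hbn (norm_nonneg _))
      _ = (n + 1 : ℕ) * ‖a - b‖ := by push_cast; ring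

section phi

variable {Ω : Type*} [MeasurableSpace Ω] (μ : Measure Ω) [IsProbabilityMeasure μ]
  (X : Ω → ℂ)

lemma measurable_charfn (hX : Measurable X) :
    Measurable (fun t : ℂ => ∫ ω, Complex.exp (Complex.I * ((starRingEnd ℂ t * X ω).re : ℂ)) ∂μ) := by
  have hF : StronglyMeasurable
      (fun p : ℂ × Ω => Complex.exp (Complex.I * ((starRingEnd ℂ p.1 * X p.2).re : ℂ))) := by
    apply Measurable.stronglyMeasurable
    fun_prop
  exact (hF.integral_prod_right').measurable

lemma abs_charfn_le_one (t : ℂ) :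
    ‖∫ ω, Complex.exp (Complex.I * ((starRingEnd ℂ t * X ω).re : ℂ)) ∂μ‖ ≤ 1 := by
  have := norm_integral_le_of_norm_le_const
    (C := 1) (μ := μ)
    (f := fun ω => Complex.exp (Complex.I * ((starRingEnd ℂ t * X ω).re : ℂ)))
    (Filter.Eventually.of_forall fun ω => by
      rw [abs_cexp_I_real])
  simpa using this

end phi

lemma key_estimate (m : ℕ) (lam : ℂ) (φ ψ : ℂ → ℂ)
    (hφm : Measurable φ) (hψm : Measurable ψ)
    (hφ1 : ∀ s, ‖φ s‖ ≤ 1) (hψ1 : ∀ s, ‖ψ s‖ ≤ 1)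
    (K₀ : ℝ)
    (hdiff : ∀ s : ℂ, s ≠ 0 → ‖φ s - ψ s‖ ≤ K₀ * ‖s‖ ^ 2)
    (hc0 : 0 ≤ 2 * lam.re)
    (t : ℂ) (ht : t ≠ 0) :
    ‖(∫ u, (φ (Complex.exp (-(starRingEnd ℂ lam) * u) * t)) ^ m ∂(lawT m)) -
        ∫ u, (ψ (Complex.exp (-(starRingEnd ℂ lam) * u) * t)) ^ m ∂(lawT m)‖
      ≤ ((m : ℝ) * K₀ * ‖t‖ ^ 2) * ∫ u, Real.exp (-(2 * lam.re) * u) ∂(lawT m) := by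
  haveI := isProb_lawT m
  have hgmeas : Measurable (fun u : ℝ => Complex.exp (-(starRingEnd ℂ lam) * u) * t) := by
    fun_prop
  have hgne : ∀ u : ℝ, Complex.exp (-(starRingEnd ℂ lam) * u) * t ≠ 0 :=
    fun u => mul_ne_zero (Complex.exp_ne_zero _) ht
  have habs : ∀ u : ℝ,
      ‖Complex.exp (-(starRingEnd ℂ lam) * u) * t‖ ^ 2
        = Real.exp (-(2 * lam.re) * u) * ‖t‖ ^ 2 := by
    intro u
    have hre : (-(starRingEnd ℂ lam) * (u : ℂ)).re = -(lam.re * u) := by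
      simp [Complex.mul_re]
    rw [norm_mul, mul_pow, Complex.norm_exp, hre,
      show Real.exp (-(lam.re * u)) ^ 2 = Real.exp (-(2 * lam.re) * u) by
        rw [sq, ← Real.exp_add]; congr 1; ring]
  have Int1 : Integrable (fun u : ℝ =>
      (φ (Complex.exp (-(starRingEnd ℂ lam) * u) * t)) ^ m) (lawT m) := by
    apply MeasureTheory.Integrable.mono' (integrable_const (1 : ℝ))
    · exact ((hφm.comp hgmeas).pow_const m).aestronglyMeasurable
    · filter_upwards with u
      rw [norm_pow]
      exact pow_le_one₀ (norm_nonneg _) (hφ1 _)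
  have Int2 : Integrable (fun u : ℝ =>
      (ψ (Complex.exp (-(starRingEnd ℂ lam) * u) * t)) ^ m) (lawT m) := by
    apply MeasureTheory.Integrable.mono' (integrable_const (1 : ℝ))
    · exact ((hψm.comp hgmeas).pow_const m).aestronglyMeasurable
    · filter_upwards with u
      rw [norm_pow]
      exact pow_le_one₀ (norm_nonneg _) (hψ1 _)
  have pointwise : ∀ u : ℝ,
      ‖(φ (Complex.exp (-(starRingEnd ℂ lam) * u) * t)) ^ m
          - (ψ (Complex.exp (-(starRingEnd ℂ lam) * u) * t)) ^ m‖
        ≤ ((m : ℝ) * K₀ * ‖t‖ ^ 2) * Real.exp (-(2 * lam.re) * u) := by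
    intro u
    calc ‖(φ (Complex.exp (-(starRingEnd ℂ lam) * u) * t)) ^ m
            - (ψ (Complex.exp (-(starRingEnd ℂ lam) * u) * t)) ^ m‖
        ≤ m * ‖φ (Complex.exp (-(starRingEnd ℂ lam) * u) * t)
            - ψ (Complex.exp (-(starRingEnd ℂ lam) * u) * t)‖ :=
          abs_pow_sub_pow_le _ _ (hφ1 _) (hψ1 _) m
      _ ≤ m * (K₀ * ‖Complex.exp (-(starRingEnd ℂ lam) * u) * t‖ ^ 2) :=
          mul_le_mul_of_nonneg_left (hdiff _ (hgne u)) (Nat.cast_nonneg m)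
      _ = ((m : ℝ) * K₀ * ‖t‖ ^ 2) * Real.exp (-(2 * lam.re) * u) := by
          rw [habs u]; ring
  rw [← integral_sub Int1 Int2]
  calc ‖∫ u, ((φ (Complex.exp (-(starRingEnd ℂ lam) * u) * t)) ^ m
          - (ψ (Complex.exp (-(starRingEnd ℂ lam) * u) * t)) ^ m) ∂(lawT m)‖
      ≤ ∫ u, ‖(φ (Complex.exp (-(starRingEnd ℂ lam) * u) * t)) ^ m
          - (ψ (Complex.exp (-(starRingEnd ℂ lam) * u) * t)) ^ m‖ ∂(lawT m) :=
        norm_integral_le_integral_norm _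
    _ ≤ ∫ u, ((m : ℝ) * K₀ * ‖t‖ ^ 2) * Real.exp (-(2 * lam.re) * u) ∂(lawT m) := by
        apply integral_mono (Int1.sub Int2).norm
          ((integrable_exp_lawT m _ hc0).const_mul _)
        intro u
        simp only [Pi.sub_apply]
        exact pointwise u
    _ = ((m : ℝ) * K₀ * ‖t‖ ^ 2) * ∫ u, Real.exp (-(2 * lam.re) * u) ∂(lawT m) :=
        integral_const_mul _ _

end Stmt7Aux

/-- Contraction estimate on characteristic functions: for `t ≠ 0`,
`|E[φᵐ(e^{-λ̄T}t)] − E[ψᵐ(e^{-λ̄T}t)]| / |t|² ≤ m·E[e^{-2Re(λ)T}] · sup_{s≠0} |φ(s)−ψ(s)|/|s|²`,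
and `m·E[e^{-2Re(λ)T}] < 1`. -/
theorem stmt7 {Ω : Type*} [MeasurableSpace Ω] (μ : Measure Ω) [IsProbabilityMeasure μ]
    (m : ℕ) (hm : 2 ≤ m) (lam : ℂ) (hre : 1 / 2 < lam.re)
    (X Y : Ω → ℂ) (hX : Measurable X) (hY : Measurable Y)
    (φ ψ : ℂ → ℂ)
    (hφ : ∀ t : ℂ, φ t = ∫ ω, Complex.exp (Complex.I * ((starRingEnd ℂ t * X ω).re : ℂ)) ∂μ)
    (hψ : ∀ t : ℂ, ψ t = ∫ ω, Complex.exp (Complex.I * ((starRingEnd ℂ t * Y ω).re : ℂ)) ∂μ) :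
    (∀ t : ℂ, t ≠ 0 →
      ENNReal.ofReal (‖
          ((∫ u, (φ (Complex.exp (-(starRingEnd ℂ lam) * u) * t)) ^ m ∂(lawT m)) -
            ∫ u, (ψ (Complex.exp (-(starRingEnd ℂ lam) * u) * t)) ^ m ∂(lawT m))‖
        / ‖t‖ ^ 2)
      ≤ ENNReal.ofReal (m * ∫ u, Real.exp (-(2 * lam.re) * u) ∂(lawT m)) *
          ⨆ (s : ℂ) (_ : s ≠ 0),
            ENNReal.ofReal (‖φ s - ψ s‖ / ‖s‖ ^ 2)) ∧
    m * ∫ u, Real.exp (-(2 * lam.re) * u) ∂(lawT m) < 1 := by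
  have hc1 : (1:ℝ) < 2 * lam.re := by linarith
  have hc0 : (0:ℝ) ≤ 2 * lam.re := by linarith
  have hEeq : (∫ u, Real.exp (-(2 * lam.re) * u) ∂(lawT m))
      = ∏ j : Fin (m - 1), ((j : ℝ) + 1) / ((j : ℝ) + 1 + 2 * lam.re) :=
    Stmt7Aux.integral_exp_lawT m _ hc0
  have hEpos : 0 < ∫ u, Real.exp (-(2 * lam.re) * u) ∂(lawT m) := by
    rw [hEeq]; exact Stmt7Aux.prod_pos m _ hc0
  have hlt : (m:ℝ) * ∫ u, Real.exp (-(2 * lam.re) * u) ∂(lawT m) < 1 := by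
    rw [hEeq]; exact Stmt7Aux.main_lt_one m hm _ hc1
  refine ⟨?_, hlt⟩
  intro t ht
  have hmE : 0 < (m:ℝ) * ∫ u, Real.exp (-(2 * lam.re) * u) ∂(lawT m) := by
    have hm0 : (0:ℝ) < m := by positivity
    positivity
  by_cases hK : (⨆ (s : ℂ) (_ : s ≠ 0),
      ENNReal.ofReal (‖φ s - ψ s‖ / ‖s‖ ^ 2)) = ⊤
  · rw [hK, ENNReal.mul_top (ENNReal.ofReal_pos.2 hmE).ne']
    exact le_top
  · set K₀ : ℝ := (⨆ (s : ℂ) (_ : s ≠ 0),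
        ENNReal.ofReal (‖φ s - ψ s‖ / ‖s‖ ^ 2)).toReal with hK₀def
    have hK₀ : 0 ≤ K₀ := ENNReal.toReal_nonneg
    have hKK : (⨆ (s : ℂ) (_ : s ≠ 0),
        ENNReal.ofReal (‖φ s - ψ s‖ / ‖s‖ ^ 2))
        = ENNReal.ofReal K₀ := (ENNReal.ofReal_toReal hK).symm
    have hφm : Measurable φ := by
      rw [funext hφ]; exact Stmt7Aux.measurable_charfn μ X hX
    have hψm : Measurable ψ := by
      rw [funext hψ]; exact Stmt7Aux.measurable_charfn μ Y hY
    have hφ1 : ∀ s, ‖φ s‖ ≤ 1 := fun s => by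
      rw [hφ s]; exact Stmt7Aux.abs_charfn_le_one μ X s
    have hψ1 : ∀ s, ‖ψ s‖ ≤ 1 := fun s => by
      rw [hψ s]; exact Stmt7Aux.abs_charfn_le_one μ Y s
    have hdiff : ∀ s : ℂ, s ≠ 0 → ‖φ s - ψ s‖ ≤ K₀ * ‖s‖ ^ 2 := by
      intro s hs
      have h1 : ENNReal.ofReal (‖φ s - ψ s‖ / ‖s‖ ^ 2)
          ≤ ⨆ (s : ℂ) (_ : s ≠ 0),
            ENNReal.ofReal (‖φ s - ψ s‖ / ‖s‖ ^ 2) :=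
        le_iSup₂ (f := fun (s : ℂ) (_ : s ≠ 0) =>
          ENNReal.ofReal (‖φ s - ψ s‖ / ‖s‖ ^ 2)) s hs
      rw [hKK, ENNReal.ofReal_le_ofReal_iff hK₀] at h1
      have hs2 : (0:ℝ) < ‖s‖ ^ 2 := pow_pos (norm_pos_iff.2 hs) 2
      calc ‖φ s - ψ s‖
          = ‖φ s - ψ s‖ / ‖s‖ ^ 2 * ‖s‖ ^ 2 := by
            field_simp
        _ ≤ K₀ * ‖s‖ ^ 2 := mul_le_mul_of_nonneg_right h1 hs2.le
    have key := Stmt7Aux.key_estimate m lam φ ψ hφm hψm hφ1 hψ1 K₀ hdiff hc0 t ht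
    have ht2 : (0:ℝ) < ‖t‖ ^ 2 := pow_pos (norm_pos_iff.2 ht) 2
    have hreal : ‖(∫ u, (φ (Complex.exp (-(starRingEnd ℂ lam) * u) * t)) ^ m ∂(lawT m)) -
          ∫ u, (ψ (Complex.exp (-(starRingEnd ℂ lam) * u) * t)) ^ m ∂(lawT m)‖
        / ‖t‖ ^ 2
        ≤ ((m : ℝ) * ∫ u, Real.exp (-(2 * lam.re) * u) ∂(lawT m)) * K₀ := by
      rw [div_le_iff₀ ht2]
      refine le_trans key (le_of_eq ?_)
      ring
    refine le_trans (ENNReal.ofReal_le_ofReal hreal) ?_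
    rw [ENNReal.ofReal_mul hmE.le, hKK]
end

section
/- Let ψ : (0,∞) → [0,∞) be a bounded measurable function, let B be a strictly positive real random variable, and let p ∈ (0,1), a > 0 and C ≥ 0 be constants such that ψ(r) ≤ p·E[ψ(Br)] + C r^{−a} for all r > 0. If p·E[B^{−a}] < 1, then ψ(r) ≤ C r^{−a} / (1 − p·E[B^{−a}]) for all r > 0; in particular ψ(r) = O(r^{−a}) as r → ∞. -/
open MeasureTheory Filter

/-- Gronwall-type lemma: if `ψ : (0,∞) → [0,∞)` is bounded and measurable,
`B > 0` a.s., `p ∈ (0,1)`, `a > 0`, `C ≥ 0`, `ψ(r) ≤ p·E[ψ(Br)] + C r^{-a}` for all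
`r > 0`, and `p·E[B^{-a}] < 1`, then `ψ(r) ≤ C r^{-a}/(1 − p·E[B^{-a}])` for all `r > 0`. -/
theorem stmt12 {Ω : Type*} [MeasurableSpace Ω] (μ : Measure Ω) [IsProbabilityMeasure μ]
    (ψ : ℝ → ℝ) (hψmeas : Measurable ψ)
    (hψpos : ∀ r : ℝ, 0 < r → 0 ≤ ψ r) (hψbdd : ∃ M : ℝ, ∀ r : ℝ, 0 < r → ψ r ≤ M)
    (B : Ω → ℝ) (hBmeas : Measurable B) (hBpos : ∀ᵐ ω ∂μ, 0 < B ω)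
    (p a C : ℝ) (hp : 0 < p) (hp1 : p < 1) (ha : 0 < a) (hC : 0 ≤ C)
    (hrec : ∀ r : ℝ, 0 < r → ψ r ≤ p * (∫ ω, ψ (B ω * r) ∂μ) + C * r ^ (-a))
    (hBint : Integrable (fun ω => B ω ^ (-a)) μ)
    (hcontr : p * ∫ ω, B ω ^ (-a) ∂μ < 1) :
    ∀ r : ℝ, 0 < r → ψ r ≤ C * r ^ (-a) / (1 - p * ∫ ω, B ω ^ (-a) ∂μ) := by
  obtain ⟨M, hM⟩ := hψbdd
  set I := ∫ ω, B ω ^ (-a) ∂μ with hIdef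
  have hM0 : 0 ≤ M := le_trans (hψpos 1 one_pos) (hM 1 one_pos)
  have hI0 : 0 ≤ I :=
    integral_nonneg_of_ae (hBpos.mono fun ω hω => (Real.rpow_pos_of_pos hω _).le)
  have hq0 : 0 ≤ p * I := mul_nonneg hp.le hI0
  have h1q : 0 < 1 - p * I := by linarith
  have key : ∀ n : ℕ, ∀ r : ℝ, 0 < r → ψ r ≤ p ^ n * M + C * r ^ (-a) / (1 - p * I) := by
    intro n
    induction n with
    | zero =>
      intro r hr
      have h0 : 0 ≤ C * r ^ (-a) / (1 - p * I) :=
        div_nonneg (mul_nonneg hC (Real.rpow_pos_of_pos hr _).le) h1q.le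
      have := hM r hr
      simp only [pow_zero, one_mul]
      linarith
    | succ n ih =>
      intro r hr
      have hint1 : Integrable (fun ω => ψ (B ω * r)) μ := by
        refine ⟨(hψmeas.comp (hBmeas.mul_const r)).aestronglyMeasurable, ?_⟩
        apply HasFiniteIntegral.of_bounded (C := M)
        filter_upwards [hBpos] with ω hω
        rw [Real.norm_eq_abs, abs_of_nonneg (hψpos _ (mul_pos hω hr))]
        exact hM _ (mul_pos hω hr)
      have hint2' : Integrable (fun ω => C * (B ω * r) ^ (-a) / (1 - p * I)) μ := by
        apply (((hBint.mul_const (r ^ (-a))).const_mul C).div_const (1 - p * I)).congr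
        filter_upwards [hBpos] with ω hω
        rw [Real.mul_rpow hω.le hr.le]
      have hint2 : Integrable
          (fun ω => p ^ n * M + C * (B ω * r) ^ (-a) / (1 - p * I)) μ :=
        (integrable_const _).add hint2'
      have hmono : (∫ ω, ψ (B ω * r) ∂μ) ≤
          ∫ ω, (p ^ n * M + C * (B ω * r) ^ (-a) / (1 - p * I)) ∂μ := by
        apply integral_mono_ae hint1 hint2
        filter_upwards [hBpos] with ω hω
        exact ih _ (mul_pos hω hr)
      have hcalc : (∫ ω, (p ^ n * M + C * (B ω * r) ^ (-a) / (1 - p * I)) ∂μ)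
          = p ^ n * M + C * r ^ (-a) / (1 - p * I) * I := by
        rw [integral_add (integrable_const _) hint2', integral_const, probReal_univ]
        have : (∫ ω, C * (B ω * r) ^ (-a) / (1 - p * I) ∂μ)
            = ∫ ω, (C * r ^ (-a) / (1 - p * I)) * B ω ^ (-a) ∂μ := by
          apply integral_congr_ae
          filter_upwards [hBpos] with ω hω
          rw [Real.mul_rpow hω.le hr.le]; ring
        rw [this, integral_const_mul]
        simp [mul_comm, ← hIdef]
      have halg : p * (p ^ n * M + C * r ^ (-a) / (1 - p * I) * I) + C * r ^ (-a)
          = p ^ (n + 1) * M + C * r ^ (-a) / (1 - p * I) := by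
        field_simp
        ring
      calc ψ r ≤ p * (∫ ω, ψ (B ω * r) ∂μ) + C * r ^ (-a) := hrec r hr
        _ ≤ p * (p ^ n * M + C * r ^ (-a) / (1 - p * I) * I) + C * r ^ (-a) := by
            rw [← hcalc]; gcongr
        _ = p ^ (n + 1) * M + C * r ^ (-a) / (1 - p * I) := halg
  intro r hr
  have hten : Tendsto (fun n : ℕ => p ^ n * M + C * r ^ (-a) / (1 - p * I)) atTop
      (nhds (0 * M + C * r ^ (-a) / (1 - p * I))) :=
    (((tendsto_pow_atTop_nhds_zero_of_lt_one hp.le hp1).mul_const M).add tendsto_const_nhds)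
  have := ge_of_tendsto hten (Eventually.of_forall fun n => key n r hr)
  simpa using this
end
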